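/- Let α, β > 0 and let (α_n, β_n) be a sequence of pairs of positive parameters with (α_n, β_n) → (α, β). Then the minimizers x_{α_n,β_n} of Φ_{α_n,β_n} converge strongly in ℓ² to the minimizer x_{α,β} of Φ_{α,β}. -/

import Mathlib

noncomputable section

open Filter Topology

/-- `ℓ²(ℕ, ℝ)`. -/
abbrev ltwo : Type := lp (fun _ : ℕ => ℝ) 2

/-- `x ∈ ℓ¹`. -/
def inL1 (x : ltwo) : Prop := Memℓp (fun i => x i) 1

/-- The `ℓ¹`-norm `‖x‖_{ℓ¹} = ∑ |xᵢ|` (junk value if `x ∉ ℓ¹`). -/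
noncomputable def l1norm (x : ltwo) : ℝ := ∑' i, |x i|

/-- The elastic-net functional `Φ_{α,β}(x) = ½‖Kx − y‖² + α‖x‖₁ + (β/2)‖x‖₂²`,
real-valued on its effective domain `ℓ¹ ∩ ℓ²` (the convention `Φ = +∞` off `ℓ¹` is
implemented by restricting all statements to `inL1`). -/
noncomputable def Phi {H : Type*} [NormedAddCommGroup H] [InnerProductSpace ℝ H]
    (K : ltwo →L[ℝ] H) (y : H) (α β : ℝ) (x : ltwo) : ℝ :=
  (1 / 2) * ‖K x - y‖ ^ 2 + α * l1norm x + (β / 2) * ‖x‖ ^ 2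

/-- `x` is a minimizer of `Φ_{α,β}` over `ℓ²` (with the `+∞` convention off `ℓ¹`). -/
def IsMinimizer {H : Type*} [NormedAddCommGroup H] [InnerProductSpace ℝ H]
    (K : ltwo →L[ℝ] H) (y : H) (α β : ℝ) (x : ltwo) : Prop :=
  inL1 x ∧ ∀ z : ltwo, inL1 z → Phi K y α β x ≤ Phi K y α β z


lemma inL1_summable {x : ltwo} (hx : inL1 x) : Summable fun i => |x i| := by
  have h := (memℓp_gen_iff (p := 1) (E := fun _ : ℕ => ℝ) (by norm_num)).1 hx
  simpa [Real.norm_eq_abs] using h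

lemma l1norm_nonneg (x : ltwo) : 0 ≤ l1norm x :=
  tsum_nonneg fun i => abs_nonneg _

lemma inL1_zero : inL1 (0 : ltwo) := by
  have : Memℓp (0 : ∀ _ : ℕ, ℝ) 1 := zero_memℓp
  exact this

lemma l1norm_zero : l1norm (0 : ltwo) = 0 := by
  simp [l1norm]

lemma key_strong {H : Type*} [NormedAddCommGroup H] [InnerProductSpace ℝ H]
    (K : ltwo →L[ℝ] H) (y : H) {α β : ℝ} (hα : 0 ≤ α) (hβ : 0 < β)
    {xm : ltwo} (hmin : IsMinimizer K y α β xm) {z : ltwo} (hz : inL1 z) :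
    ‖z - xm‖ ^ 2 ≤ 4 / β * (Phi K y α β z - Phi K y α β xm) := by
  set m : ltwo := (2⁻¹ : ℝ) • (xm + z) with hm
  have hm1 : inL1 m := by
    have : Memℓp ((2⁻¹ : ℝ) • (⇑xm + ⇑z)) 1 := (hmin.1.add hz).const_smul _
    show Memℓp (⇑m) 1
    have hcoe : ⇑m = (2⁻¹ : ℝ) • (⇑xm + ⇑z) := by
      rw [hm, lp.coeFn_smul, lp.coeFn_add]
    rw [hcoe]; exact this
  have hmapp : ∀ i, m i = 2⁻¹ * (xm i + z i) := by
    intro i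
    have hcoe : ⇑m = (2⁻¹ : ℝ) • (⇑xm + ⇑z) := by
      rw [hm, lp.coeFn_smul, lp.coeFn_add]
    simp [hcoe]
  -- l1 midpoint inequality
  have hs1 := inL1_summable hmin.1
  have hs2 := inL1_summable hz
  have hS : Summable (fun i => 2⁻¹ * |xm i| + 2⁻¹ * |z i|) :=
    (hs1.mul_left _).add (hs2.mul_left _)
  have hle : ∀ i, |m i| ≤ 2⁻¹ * |xm i| + 2⁻¹ * |z i| := by
    intro i
    rw [hmapp i, abs_mul]
    have : |xm i + z i| ≤ |xm i| + |z i| := abs_add_le _ _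
    rw [show |(2:ℝ)⁻¹| = 2⁻¹ by norm_num]
    nlinarith
  have hSm : Summable fun i => |m i| :=
    hS.of_nonneg_of_le (fun i => abs_nonneg _) hle
  have h4 : l1norm m ≤ 2⁻¹ * l1norm xm + 2⁻¹ * l1norm z := by
    have := Summable.tsum_le_tsum hle hSm hS
    rwa [Summable.tsum_add (hs1.mul_left _) (hs2.mul_left _), tsum_mul_left, tsum_mul_left] at this
  -- data-fidelity midpoint inequality
  have hKm : K m - y = (2⁻¹ : ℝ) • (K xm - y) + (2⁻¹ : ℝ) • (K z - y) := by
    rw [hm, map_smul, map_add]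
    module
  have h3 : ‖K m - y‖ ≤ 2⁻¹ * ‖K xm - y‖ + 2⁻¹ * ‖K z - y‖ := by
    rw [hKm]
    calc ‖(2⁻¹ : ℝ) • (K xm - y) + (2⁻¹ : ℝ) • (K z - y)‖
        ≤ ‖(2⁻¹ : ℝ) • (K xm - y)‖ + ‖(2⁻¹ : ℝ) • (K z - y)‖ := norm_add_le _ _
      _ = 2⁻¹ * ‖K xm - y‖ + 2⁻¹ * ‖K z - y‖ := by
          rw [norm_smul, norm_smul]; norm_num
  have h3sq : ‖K m - y‖ ^ 2 ≤ (2⁻¹ * ‖K xm - y‖ + 2⁻¹ * ‖K z - y‖) ^ 2 :=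
    pow_le_pow_left₀ (norm_nonneg _) h3 2
  -- parallelogram
  have hpar := parallelogram_law_with_norm ℝ xm z
  have hm_norm : ‖m‖ = 2⁻¹ * ‖xm + z‖ := by
    rw [hm, norm_smul]; norm_num
  have hzx : ‖z - xm‖ = ‖xm - z‖ := norm_sub_rev _ _
  have hΦ := hmin.2 m hm1
  simp only [Phi] at hΦ ⊢
  have h4' : α * l1norm m ≤ α * (2⁻¹ * l1norm xm + 2⁻¹ * l1norm z) :=
    mul_le_mul_of_nonneg_left h4 hα
  have h3sq' : ‖K m - y‖ ^ 2 ≤ ‖K xm - y‖ ^ 2 / 2 + ‖K z - y‖ ^ 2 / 2 := by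
    nlinarith [sq_nonneg (‖K xm - y‖ - ‖K z - y‖)]
  have hm2 : β / 2 * ‖m‖ ^ 2 =
      β / 4 * ‖xm‖ ^ 2 + β / 4 * ‖z‖ ^ 2 - β / 8 * ‖xm - z‖ ^ 2 := by
    rw [hm_norm]
    linear_combination (β / 8) * hpar
  rw [div_mul_eq_mul_div, le_div_iff₀ hβ, hzx]
  linarith [hΦ, h3sq', h4', hm2]


/-- Stability: if `(αₙ, βₙ) → (α, β)` with all parameters positive, then the minimizers
`x_{αₙ,βₙ}` of `Φ_{αₙ,βₙ}` converge strongly in `ℓ²` to the minimizer `x_{α,β}` of `Φ_{α,β}`. -/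
theorem elasticNet_minimizers_stability
    {H : Type*} [NormedAddCommGroup H] [InnerProductSpace ℝ H]
    (K : ltwo →L[ℝ] H) (y : H) (α β : ℝ) (hα : 0 < α) (hβ : 0 < β)
    (αs βs : ℕ → ℝ) (hαs : ∀ n, 0 < αs n) (hβs : ∀ n, 0 < βs n)
    (hconv : Tendsto (fun n => (αs n, βs n)) atTop (nhds (α, β)))
    (xs : ℕ → ltwo) (hxs : ∀ n, IsMinimizer K y (αs n) (βs n) (xs n))
    (xlim : ltwo) (hxlim : IsMinimizer K y α β xlim) :
    Tendsto xs atTop (nhds xlim) := by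
  have hαt : Tendsto αs atTop (𝓝 α) := by
    have := (continuous_fst.tendsto (α, β)).comp hconv
    exact this
  have hβt : Tendsto βs atTop (𝓝 β) := by
    have := (continuous_snd.tendsto (α, β)).comp hconv
    exact this
  -- bounds on minimizers from comparison with 0
  have hPhi0 : ∀ a b : ℝ, Phi K y a b (0 : ltwo) = (1/2) * ‖y‖^2 := by
    intro a b
    simp [Phi, l1norm_zero]
  have hbound : ∀ n, αs n * l1norm (xs n) ≤ (1/2) * ‖y‖^2 ∧
      (βs n / 2) * ‖xs n‖^2 ≤ (1/2) * ‖y‖^2 := by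
    intro n
    have h := (hxs n).2 0 inL1_zero
    rw [hPhi0] at h
    simp only [Phi] at h
    have h1 : 0 ≤ (1/2 : ℝ) * ‖K (xs n) - y‖^2 := by positivity
    have h2 : 0 ≤ αs n * l1norm (xs n) :=
      mul_nonneg (hαs n).le (l1norm_nonneg _)
    have h3 : 0 ≤ (βs n / 2) * ‖xs n‖^2 :=
      mul_nonneg (by linarith [hβs n]) (sq_nonneg _)
    constructor <;> linarith
  set C1 : ℝ := l1norm xlim + ‖y‖^2 / α with hC1
  set C2 : ℝ := ‖xlim‖^2 + 2 * ‖y‖^2 / β with hC2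
  set B : ℕ → ℝ := fun n => |αs n - α| * C1 + |βs n - β| / 2 * C2 with hB
  have hBt : Tendsto B atTop (𝓝 0) := by
    have h1 : Tendsto (fun n => |αs n - α|) atTop (𝓝 0) := by
      have := (hαt.sub (tendsto_const_nhds (x := α))).abs
      simpa using this
    have h2 : Tendsto (fun n => |βs n - β|) atTop (𝓝 0) := by
      have := (hβt.sub (tendsto_const_nhds (x := β))).abs
      simpa using this
    have := (h1.mul tendsto_const_nhds (b := C1)).add
      (((h2.div_const 2)).mul (tendsto_const_nhds (x := C2)))
    simpa using this
  -- eventual parameter lower bounds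
  have hev1 : ∀ᶠ n in atTop, α / 2 < αs n :=
    hαt.eventually (eventually_gt_nhds (by linarith))
  have hev2 : ∀ᶠ n in atTop, β / 2 < βs n :=
    hβt.eventually (eventually_gt_nhds (by linarith))
  have hsq : Tendsto (fun n => ‖xs n - xlim‖^2) atTop (𝓝 0) := by
    have hg : Tendsto (fun n => 4 / β * B n) atTop (𝓝 0) := by
      have := hBt.const_mul (4 / β)
      simpa using this
    refine squeeze_zero' (Eventually.of_forall fun n => sq_nonneg _) ?_ hg
    filter_upwards [hev1, hev2] with n h1 h2
    have hkey := key_strong K y hα.le hβ hxlim (hxs n).1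
    have hL : l1norm (xs n) ≤ ‖y‖^2 / α := by
      have hb := (hbound n).1
      rw [le_div_iff₀ hα]
      nlinarith [mul_nonneg (show (0:ℝ) ≤ 2 * αs n - α by linarith)
        (l1norm_nonneg (xs n))]
    have hN : ‖xs n‖^2 ≤ 2 * ‖y‖^2 / β := by
      have hb := (hbound n).2
      rw [le_div_iff₀ hβ]
      nlinarith [mul_nonneg (show (0:ℝ) ≤ 2 * βs n - β by linarith)
        (sq_nonneg ‖xs n‖)]
    -- Phi_{α,β}(xs n) - Phi_{α,β}(xlim) ≤ B n
    have hmono := (hxs n).2 xlim hxlim.1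
    simp only [Phi] at hmono
    have hdiff : Phi K y α β (xs n) - Phi K y α β xlim ≤ B n := by
      simp only [Phi]
      have e1 : (α - αs n) * l1norm (xs n) ≤ |αs n - α| * (‖y‖^2 / α) := by
        calc (α - αs n) * l1norm (xs n) ≤ |αs n - α| * l1norm (xs n) := by
              apply mul_le_mul_of_nonneg_right _ (l1norm_nonneg _)
              rw [abs_sub_comm]; exact le_abs_self _
          _ ≤ |αs n - α| * (‖y‖^2 / α) :=
              mul_le_mul_of_nonneg_left hL (abs_nonneg _)
      have e2 : (αs n - α) * l1norm xlim ≤ |αs n - α| * l1norm xlim :=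
        mul_le_mul_of_nonneg_right (le_abs_self _) (l1norm_nonneg _)
      have e3 : (β - βs n) / 2 * ‖xs n‖^2 ≤ |βs n - β| / 2 * (2 * ‖y‖^2 / β) := by
        calc (β - βs n) / 2 * ‖xs n‖^2 ≤ |βs n - β| / 2 * ‖xs n‖^2 := by
              apply mul_le_mul_of_nonneg_right _ (sq_nonneg _)
              rw [abs_sub_comm]
              have := le_abs_self (β - βs n); linarith
          _ ≤ |βs n - β| / 2 * (2 * ‖y‖^2 / β) :=
              mul_le_mul_of_nonneg_left hN (by positivity)
      have e4 : (βs n - β) / 2 * ‖xlim‖^2 ≤ |βs n - β| / 2 * ‖xlim‖^2 := by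
        apply mul_le_mul_of_nonneg_right _ (sq_nonneg _)
        have := le_abs_self (βs n - β); linarith
      have hBn : B n = |αs n - α| * l1norm xlim + |αs n - α| * (‖y‖^2 / α)
          + |βs n - β| / 2 * ‖xlim‖^2 + |βs n - β| / 2 * (2 * ‖y‖^2 / β) := by
        simp only [hB, hC1, hC2]; ring
      rw [hBn]
      linarith
    calc ‖xs n - xlim‖^2 ≤ 4 / β * (Phi K y α β (xs n) - Phi K y α β xlim) := hkey
      _ ≤ 4 / β * B n :=
          mul_le_mul_of_nonneg_left hdiff (div_nonneg (by norm_num) hβ.le)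
  -- conclude
  rw [tendsto_iff_norm_sub_tendsto_zero]
  have := hsq.sqrt
  simp only [Real.sqrt_zero] at this
  refine this.congr fun n => ?_
  rw [Real.sqrt_sq (norm_nonneg _)]
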